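/- Let Ω be a bounded open subset of ℝ^N, s ∈ (0,1), and A an N-function. Then every function u of class C² on ℝ^N with compact support contained in Ω belongs to W^s_0L_A(Ω); in particular there exists λ > 0 such that ∫_{ℝ^N}∫_{ℝ^N} A(λ|u(x)−u(y)|/|x−y|^s) dx dy/|x−y|^N < ∞. -/

import Mathlib

open MeasureTheory Filter Set
open scoped ENNReal NNReal RealInnerProductSpace

noncomputable section

/-- An N-function: continuous, convex on `[0,∞)`, positive on `(0,∞)`,
`A t / t → 0` as `t → 0⁺`, `A t / t → ∞` as `t → ∞`, extended evenly to `ℝ`. -/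
structure IsNFunction (A : ℝ → ℝ) : Prop where
  continuous : Continuous A
  convexOn : ConvexOn ℝ (Set.Ici 0) A
  pos : ∀ t > (0:ℝ), 0 < A t
  tendsto_zero : Tendsto (fun t => A t / t) (nhdsWithin 0 (Set.Ioi 0)) (nhds 0)
  tendsto_top : Tendsto (fun t => A t / t) atTop atTop
  even : ∀ t, A (-t) = A t

/-- An N-function together with its right-continuous density `a`,
so that `A t = ∫₀ᵗ a(s) ds`. -/
structure IsNFunctionDeriv (A a : ℝ → ℝ) : Prop where
  toIsNFunction : IsNFunction A
  eq_integral : ∀ t, 0 ≤ t → A t = ∫ s in (0:ℝ)..t, a s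
  monotone : MonotoneOn a (Set.Ici 0)
  rightCont : ∀ t, 0 ≤ t → ContinuousWithinAt a (Set.Ici t) t
  zero : a 0 = 0
  pos : ∀ t > (0:ℝ), 0 < a t
  tendsto_top : Tendsto a atTop atTop

/-- The Luxemburg norm of `u` on `Ω`. -/
def luxNorm {N : ℕ} (A : ℝ → ℝ) (Ω : Set (EuclideanSpace ℝ (Fin N)))
    (u : EuclideanSpace ℝ (Fin N) → ℝ) : ℝ :=
  sInf {lam : ℝ | 0 < lam ∧ ∫⁻ x in Ω, ENNReal.ofReal (A (|u x| / lam)) ≤ 1}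

/-- Membership in the Orlicz space `L_A(Ω)`. -/
def MemLA {N : ℕ} (A : ℝ → ℝ) (Ω : Set (EuclideanSpace ℝ (Fin N)))
    (u : EuclideanSpace ℝ (Fin N) → ℝ) : Prop :=
  Measurable u ∧ ∃ lam > (0:ℝ), ∫⁻ x in Ω, ENNReal.ofReal (A (lam * |u x|)) < ⊤

/-- The Gagliardo-type modular `∫_Ω∫_Ω A(|u x - u y|/|x-y|^s) |x-y|^{-N} dx dy`. -/
def gaglModular {N : ℕ} (A : ℝ → ℝ) (s : ℝ) (Ω : Set (EuclideanSpace ℝ (Fin N)))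
    (u : EuclideanSpace ℝ (Fin N) → ℝ) : ℝ≥0∞ :=
  ∫⁻ x in Ω, ∫⁻ y in Ω,
    ENNReal.ofReal (A (|u x - u y| / ‖x - y‖ ^ s) / ‖x - y‖ ^ N)

/-- The Gagliardo seminorm `[u]_{s,A}`. -/
def gaglSeminorm {N : ℕ} (A : ℝ → ℝ) (s : ℝ) (Ω : Set (EuclideanSpace ℝ (Fin N)))
    (u : EuclideanSpace ℝ (Fin N) → ℝ) : ℝ :=
  sInf {lam : ℝ | 0 < lam ∧ ∫⁻ x in Ω, ∫⁻ y in Ω,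
    ENNReal.ofReal (A (|u x - u y| / (lam * ‖x - y‖ ^ s)) / ‖x - y‖ ^ N) ≤ 1}

/-- Membership in the fractional Orlicz–Sobolev space `W^s L_A(Ω)`. -/
def MemWsLA {N : ℕ} (A : ℝ → ℝ) (s : ℝ) (Ω : Set (EuclideanSpace ℝ (Fin N)))
    (u : EuclideanSpace ℝ (Fin N) → ℝ) : Prop :=
  MemLA A Ω u ∧ ∃ lam > (0:ℝ), (∫⁻ x in Ω, ∫⁻ y in Ω,
    ENNReal.ofReal (A (lam * |u x - u y| / ‖x - y‖ ^ s) / ‖x - y‖ ^ N)) < ⊤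

/-- The norm `‖u‖_{s,A} = ‖u‖_A + [u]_{s,A}` of `W^s L_A(Ω)`. -/
def fracNorm {N : ℕ} (A : ℝ → ℝ) (s : ℝ) (Ω : Set (EuclideanSpace ℝ (Fin N)))
    (u : EuclideanSpace ℝ (Fin N) → ℝ) : ℝ :=
  luxNorm A Ω u + gaglSeminorm A s Ω u

/-- Membership in `W^s_0 L_A(Ω)`: member of `W^s L_A(ℝ^N)` vanishing a.e. outside `Ω`. -/
def MemW0 {N : ℕ} (A : ℝ → ℝ) (s : ℝ) (Ω : Set (EuclideanSpace ℝ (Fin N)))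
    (u : EuclideanSpace ℝ (Fin N) → ℝ) : Prop :=
  MemWsLA A s Set.univ u ∧ ∀ᵐ x, x ∉ Ω → u x = 0

/-- The set of values `t a(t) / A(t)` for `t > 0`; `p₀` is its `sInf`, `p⁰` its `sSup`. -/
def ratioSet (A a : ℝ → ℝ) : Set ℝ := {r | ∃ t, 0 < t ∧ r = t * a t / A t}

/-- `Ω` has Lipschitz (C^{0,1}) boundary: near each boundary point, `Ω` is the
subgraph of a Lipschitz function in a suitable direction. -/
def HasLipschitzBoundary {N : ℕ} (Ω : Set (EuclideanSpace ℝ (Fin N))) : Prop :=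
  ∀ x ∈ frontier Ω, ∃ U : Set (EuclideanSpace ℝ (Fin N)), IsOpen U ∧ x ∈ U ∧
    ∃ (v : EuclideanSpace ℝ (Fin N)) (φ : EuclideanSpace ℝ (Fin N) → ℝ) (K : ℝ≥0),
      ‖v‖ = 1 ∧ LipschitzWith K φ ∧
      Ω ∩ U = {y | y ∈ U ∧ (inner ℝ y v : ℝ) < φ (y - (inner ℝ y v : ℝ) • v)}



open Metric in
lemma lintegral_ball_rpow {N : ℕ} (hN : 0 < N) {c : ℝ} (hcN : -(N:ℝ) < c) (hc0 : c < 0) :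
    ∫⁻ z in ball (0 : EuclideanSpace ℝ (Fin N)) 1, ENNReal.ofReal (‖z‖ ^ c) < ⊤ := by
  haveI : Nontrivial (EuclideanSpace ℝ (Fin N)) := by
    apply Module.nontrivial_of_finrank_pos (R := ℝ)
    rw [finrank_euclideanSpace_fin]; exact hN
  have hcne : c ≠ 0 := hc0.ne
  have hmble : AEMeasurable (fun z : EuclideanSpace ℝ (Fin N) => ‖z‖ ^ c) (volume.restrict (ball (0 : EuclideanSpace ℝ (Fin N)) 1)) := by
    fun_prop
  rw [lintegral_eq_lintegral_meas_lt _
    (Eventually.of_forall fun z => Real.rpow_nonneg (norm_nonneg z) c) hmble]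
  have hsub : ∀ t : ℝ, 0 < t → {a : EuclideanSpace ℝ (Fin N) | t < ‖a‖ ^ c} ⊆ ball (0 : EuclideanSpace ℝ (Fin N)) (t ^ (1/c)) := by
    intro t ht z hz
    simp only [mem_setOf_eq] at hz
    have hz0 : z ≠ 0 := by
      rintro rfl
      simp [Real.zero_rpow hcne] at hz
      linarith
    have hzpos : 0 < ‖z‖ := norm_pos_iff.mpr hz0
    have h1c : 1/c < 0 := by
      apply div_neg_of_pos_of_neg one_pos hc0
    have h2 := Real.rpow_lt_rpow_of_neg ht hz h1c
    rw [← Real.rpow_mul hzpos.le, mul_one_div_cancel hcne, Real.rpow_one] at h2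
    simpa [mem_ball_zero_iff] using h2
  have hB : volume (ball (0 : EuclideanSpace ℝ (Fin N)) 1) < ⊤ := measure_ball_lt_top
  calc ∫⁻ t in Ioi (0:ℝ), (volume.restrict (ball (0 : EuclideanSpace ℝ (Fin N)) 1)) {a : EuclideanSpace ℝ (Fin N) | t < ‖a‖ ^ c}
      ≤ ∫⁻ t in Ioc (0:ℝ) 1 ∪ Ioi 1, (volume.restrict (ball (0 : EuclideanSpace ℝ (Fin N)) 1)) {a : EuclideanSpace ℝ (Fin N) | t < ‖a‖ ^ c} :=
        lintegral_mono_set Ioi_subset_Ioc_union_Ioi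
    _ ≤ (∫⁻ t in Ioc (0:ℝ) 1, (volume.restrict (ball (0 : EuclideanSpace ℝ (Fin N)) 1)) {a : EuclideanSpace ℝ (Fin N) | t < ‖a‖ ^ c})
        + ∫⁻ t in Ioi (1:ℝ), (volume.restrict (ball (0 : EuclideanSpace ℝ (Fin N)) 1)) {a : EuclideanSpace ℝ (Fin N) | t < ‖a‖ ^ c} :=
        lintegral_union_le _ _ _
    _ < ⊤ := by
        apply ENNReal.add_lt_top.2
        constructor
        · calc (∫⁻ t in Ioc (0:ℝ) 1, (volume.restrict (ball (0 : EuclideanSpace ℝ (Fin N)) 1)) {a : EuclideanSpace ℝ (Fin N) | t < ‖a‖ ^ c})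
              ≤ ∫⁻ _ in Ioc (0:ℝ) 1, volume (ball (0 : EuclideanSpace ℝ (Fin N)) 1) := by
                apply lintegral_mono
                intro t
                calc (volume.restrict (ball (0 : EuclideanSpace ℝ (Fin N)) 1)) {a : EuclideanSpace ℝ (Fin N) | t < ‖a‖ ^ c}
                    ≤ (volume.restrict (ball (0 : EuclideanSpace ℝ (Fin N)) 1)) univ := measure_mono (subset_univ _)
                  _ = volume (ball (0 : EuclideanSpace ℝ (Fin N)) 1) := by
                      rw [Measure.restrict_apply_univ]
            _ = volume (ball (0 : EuclideanSpace ℝ (Fin N)) 1) * volume (Ioc (0:ℝ) 1) := setLIntegral_const _ _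
            _ < ⊤ := ENNReal.mul_lt_top hB (by simp)
        · calc (∫⁻ t in Ioi (1:ℝ), (volume.restrict (ball (0 : EuclideanSpace ℝ (Fin N)) 1)) {a : EuclideanSpace ℝ (Fin N) | t < ‖a‖ ^ c})
              ≤ ∫⁻ t in Ioi (1:ℝ), ENNReal.ofReal (t ^ ((N:ℝ)/c)) * volume (ball (0 : EuclideanSpace ℝ (Fin N)) 1) := by
                apply lintegral_mono_ae
                filter_upwards [ae_restrict_mem measurableSet_Ioi] with t ht
                have ht0 : (0:ℝ) < t := lt_trans one_pos ht
                calc (volume.restrict (ball (0 : EuclideanSpace ℝ (Fin N)) 1)) {a : EuclideanSpace ℝ (Fin N) | t < ‖a‖ ^ c}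
                    ≤ volume {a : EuclideanSpace ℝ (Fin N) | t < ‖a‖ ^ c} :=
                      Measure.le_iff'.mp Measure.restrict_le_self _
                  _ ≤ volume (ball (0 : EuclideanSpace ℝ (Fin N)) (t ^ (1/c))) := measure_mono (hsub t ht0)
                  _ = ENNReal.ofReal ((t ^ (1/c)) ^ Module.finrank ℝ (EuclideanSpace ℝ (Fin N))) * volume (ball (0 : EuclideanSpace ℝ (Fin N)) 1) :=
                      Measure.addHaar_ball volume 0 (Real.rpow_nonneg ht0.le _)
                  _ = ENNReal.ofReal (t ^ ((N:ℝ)/c)) * volume (ball (0 : EuclideanSpace ℝ (Fin N)) 1) := by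
                      congr 1
                      rw [finrank_euclideanSpace_fin, ← Real.rpow_natCast (t ^ (1/c)) N,
                        ← Real.rpow_mul ht0.le]
                      congr 1
                      field_simp
            _ = (∫⁻ t in Ioi (1:ℝ), ENNReal.ofReal (t ^ ((N:ℝ)/c))) * volume (ball (0 : EuclideanSpace ℝ (Fin N)) 1) :=
                lintegral_mul_const' _ _ hB.ne
            _ < ⊤ := by
                apply ENNReal.mul_lt_top _ hB
                have hint : IntegrableOn (fun t : ℝ => t ^ ((N:ℝ)/c)) (Ioi 1) := by
                  apply integrableOn_Ioi_rpow_of_lt _ one_pos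
                  rw [div_lt_iff_of_neg hc0]
                  linarith
                exact hint.lintegral_lt_top

open Metric in
lemma lintegral_H_lt_top {N : ℕ} (hN : 0 < N) {s : ℝ} (hs0 : 0 < s) (hs1 : s < 1)
    {A1 : ℝ} (hA1 : 0 ≤ A1) :
    ∫⁻ z : EuclideanSpace ℝ (Fin N), ENNReal.ofReal
      (A1 * ((if ‖z‖ ≤ 1 then ‖z‖ ^ (1-s) else ‖z‖ ^ (-s)) / ‖z‖ ^ N)) < ⊤ := by
  rw [← lintegral_add_compl _ (measurableSet_ball (x := (0 : EuclideanSpace ℝ (Fin N))) (ε := 1))]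
  apply ENNReal.add_lt_top.2
  constructor
  · -- ball piece
    calc (∫⁻ z in ball (0 : EuclideanSpace ℝ (Fin N)) 1, ENNReal.ofReal
          (A1 * ((if ‖z‖ ≤ 1 then ‖z‖ ^ (1-s) else ‖z‖ ^ (-s)) / ‖z‖ ^ N)))
        ≤ ∫⁻ z in ball (0 : EuclideanSpace ℝ (Fin N)) 1,
            ENNReal.ofReal A1 * ENNReal.ofReal (‖z‖ ^ (1 - s - N)) := by
          apply lintegral_mono_ae
          filter_upwards [ae_restrict_mem measurableSet_ball] with z hz
          rw [mem_ball_zero_iff] at hz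
          by_cases hz0 : z = 0
          · subst hz0
            simp only [norm_zero, if_pos (zero_le_one (α := ℝ)),
              Real.zero_rpow (by linarith : 1 - s ≠ 0), zero_div, mul_zero,
              ENNReal.ofReal_zero]
            exact zero_le
          · have hzpos : 0 < ‖z‖ := norm_pos_iff.mpr hz0
            rw [if_pos hz.le, ← ENNReal.ofReal_mul hA1]
            apply ENNReal.ofReal_le_ofReal
            apply mul_le_mul_of_nonneg_left _ hA1
            rw [← Real.rpow_natCast ‖z‖ N, ← Real.rpow_sub hzpos]
      _ = ENNReal.ofReal A1 * ∫⁻ z in ball (0 : EuclideanSpace ℝ (Fin N)) 1,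
            ENNReal.ofReal (‖z‖ ^ (1 - s - N)) := lintegral_const_mul' _ _ ENNReal.ofReal_ne_top
      _ < ⊤ := by
          apply ENNReal.mul_lt_top ENNReal.ofReal_lt_top
          apply lintegral_ball_rpow hN
          · push_cast; linarith
          · have : (1:ℝ) ≤ N := by exact_mod_cast hN
            linarith
  · -- complement piece
    calc (∫⁻ z in (ball (0 : EuclideanSpace ℝ (Fin N)) 1)ᶜ, ENNReal.ofReal
          (A1 * ((if ‖z‖ ≤ 1 then ‖z‖ ^ (1-s) else ‖z‖ ^ (-s)) / ‖z‖ ^ N)))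
        ≤ ∫⁻ z in (ball (0 : EuclideanSpace ℝ (Fin N)) 1)ᶜ,
            ENNReal.ofReal (A1 * 2 ^ ((N:ℝ) + s)) *
              ENNReal.ofReal ((1 + ‖z‖) ^ (-((N:ℝ) + s))) := by
          apply lintegral_mono_ae
          filter_upwards [ae_restrict_mem measurableSet_ball.compl] with z hz
          rw [mem_compl_iff, mem_ball_zero_iff, not_lt] at hz
          have hr0 : (0:ℝ) < ‖z‖ := lt_of_lt_of_le one_pos hz
          have hite : (if ‖z‖ ≤ 1 then ‖z‖ ^ (1-s) else ‖z‖ ^ (-s)) ≤ ‖z‖ ^ (-s) := by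
            split_ifs with h
            · have h1 : ‖z‖ = 1 := le_antisymm h hz
              rw [h1]; simp
            · exact le_rfl
          have h2 : (if ‖z‖ ≤ 1 then ‖z‖ ^ (1-s) else ‖z‖ ^ (-s)) / ‖z‖ ^ N
              ≤ ‖z‖ ^ (-s - (N:ℝ)) := by
            calc (if ‖z‖ ≤ 1 then ‖z‖ ^ (1-s) else ‖z‖ ^ (-s)) / ‖z‖ ^ N
                ≤ ‖z‖ ^ (-s) / ‖z‖ ^ N := by gcongr
              _ = ‖z‖ ^ (-s - (N:ℝ)) := by
                  rw [← Real.rpow_natCast ‖z‖ N, ← Real.rpow_sub hr0]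
          have h3 : ‖z‖ ^ (-s - (N:ℝ)) ≤ 2 ^ ((N:ℝ) + s) * (1 + ‖z‖) ^ (-((N:ℝ) + s)) := by
            have h4 : (1 + ‖z‖) / 2 ≤ ‖z‖ := by linarith
            have h5 : (0:ℝ) < (1 + ‖z‖) / 2 := by linarith
            have h6 := Real.rpow_le_rpow_of_nonpos h5 h4
              (neg_nonpos.mpr (by positivity : (0:ℝ) ≤ (N:ℝ) + s))
            have h7 : -s - (N:ℝ) = -((N:ℝ) + s) := by ring
            rw [h7]
            rw [Real.div_rpow (by linarith) (by norm_num)] at h6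
            rw [div_eq_mul_inv, ← Real.rpow_neg (by norm_num : (0:ℝ) ≤ 2), neg_neg,
              mul_comm] at h6
            exact h6
          calc ENNReal.ofReal (A1 * ((if ‖z‖ ≤ 1 then ‖z‖ ^ (1-s) else ‖z‖ ^ (-s)) / ‖z‖ ^ N))
              ≤ ENNReal.ofReal (A1 * (2 ^ ((N:ℝ) + s) * (1 + ‖z‖) ^ (-((N:ℝ) + s)))) := by
                apply ENNReal.ofReal_le_ofReal
                exact mul_le_mul_of_nonneg_left (h2.trans h3) hA1
            _ = ENNReal.ofReal (A1 * 2 ^ ((N:ℝ) + s)) *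
                  ENNReal.ofReal ((1 + ‖z‖) ^ (-((N:ℝ) + s))) := by
                rw [← ENNReal.ofReal_mul (by positivity), mul_assoc]
      _ = ENNReal.ofReal (A1 * 2 ^ ((N:ℝ) + s)) *
            ∫⁻ z in (ball (0 : EuclideanSpace ℝ (Fin N)) 1)ᶜ,
              ENNReal.ofReal ((1 + ‖z‖) ^ (-((N:ℝ) + s))) :=
          lintegral_const_mul' _ _ ENNReal.ofReal_ne_top
      _ ≤ ENNReal.ofReal (A1 * 2 ^ ((N:ℝ) + s)) *
            ∫⁻ z : EuclideanSpace ℝ (Fin N),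
              ENNReal.ofReal ((1 + ‖z‖) ^ (-((N:ℝ) + s))) := by
          gcongr
          exact Measure.restrict_le_self
      _ < ⊤ := by
          apply ENNReal.mul_lt_top ENNReal.ofReal_lt_top
          apply finite_integral_one_add_norm
          rw [finrank_euclideanSpace_fin]
          linarith

lemma IsNFunction.zero {A : ℝ → ℝ} (hA : IsNFunction A) : A 0 = 0 := by
  have h1 : Tendsto A (nhdsWithin 0 (Set.Ioi 0)) (nhds (A 0)) :=
    (hA.continuous.tendsto 0).mono_left nhdsWithin_le_nhds
  have ht : Tendsto (fun t : ℝ => t) (nhdsWithin 0 (Set.Ioi 0)) (nhds 0) :=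
    tendsto_id.mono_left nhdsWithin_le_nhds
  have h2 : Tendsto A (nhdsWithin 0 (Set.Ioi 0)) (nhds 0) := by
    have h3 := hA.tendsto_zero.mul ht
    rw [zero_mul] at h3
    refine h3.congr' ?_
    filter_upwards [self_mem_nhdsWithin] with t ht'
    have htne : (t:ℝ) ≠ 0 := ne_of_gt ht'
    field_simp
  exact tendsto_nhds_unique h1 h2

lemma IsNFunction.nonneg {A : ℝ → ℝ} (hA : IsNFunction A) {t : ℝ} (ht : 0 ≤ t) : 0 ≤ A t := by
  rcases ht.eq_or_lt with h | h
  · simp [← h, hA.zero]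
  · exact (hA.pos t h).le

lemma IsNFunction.le_mul {A : ℝ → ℝ} (hA : IsNFunction A) {t : ℝ} (h0 : 0 ≤ t) (h1 : t ≤ 1) :
    A t ≤ t * A 1 := by
  have := hA.convexOn.2 (mem_Ici.mpr zero_le_one) (mem_Ici.mpr le_rfl)
    h0 (by linarith : (0:ℝ) ≤ 1 - t) (by ring)
  simpa [smul_eq_mul, hA.zero] using this


open Metric in
lemma key_finite {N : ℕ} (hN : 0 < N) {s : ℝ} (hs0 : 0 < s) (hs1 : s < 1)
    {A : ℝ → ℝ} (hA : IsNFunction A) {u : EuclideanSpace ℝ (Fin N) → ℝ}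
    (hu1 : ContDiff ℝ 2 u) (hu2 : HasCompactSupport u) :
    ∃ lam > (0:ℝ), (∫⁻ x, ∫⁻ y, ENNReal.ofReal
      (A (lam * |u x - u y| / ‖x - y‖ ^ s) / ‖x - y‖ ^ N)) < ⊤ := by
  obtain ⟨L, hL⟩ := ContDiff.lipschitzWith_of_hasCompactSupport hu2 hu1 (by norm_num)
  obtain ⟨M, hM⟩ := hu2.exists_bound_of_continuous hu1.continuous
  have hM' : ∀ x, |u x| ≤ M := by intro x; simpa using hM x
  have hM0 : 0 ≤ M := (abs_nonneg _).trans (hM' 0)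
  have hLr0 : (0:ℝ) ≤ (L:ℝ) := L.2
  have hden : (0:ℝ) < 1 + (L:ℝ) + 2 * M := by positivity
  refine ⟨(1 + (L:ℝ) + 2 * M)⁻¹, inv_pos.mpr hden, ?_⟩
  set lam : ℝ := (1 + (L:ℝ) + 2*M)⁻¹ with hlamdef
  have hlam0 : 0 < lam := inv_pos.mpr hden
  have hlam1 : lam * (1 + (L:ℝ) + 2*M) = 1 := inv_mul_cancel₀ hden.ne'
  have key1 : lam * (L:ℝ) ≤ 1 := by nlinarith [mul_nonneg hlam0.le hM0, hlam0.le]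
  have key2 : lam * (2 * M) ≤ 1 := by nlinarith [mul_nonneg hlam0.le hLr0, hlam0.le]
  have hA0 : A 0 = 0 := hA.zero
  have hA1 : 0 ≤ A 1 := hA.nonneg zero_le_one
  set K : Set (EuclideanSpace ℝ (Fin N)) := tsupport u with hKdef
  have hKm : MeasurableSet K := (isClosed_tsupport u).measurableSet
  have hKfin : volume K < ⊤ := (hu2 : IsCompact (tsupport u)).measure_lt_top
  set H : ℝ → ℝ≥0∞ :=
    fun r => ENNReal.ofReal (A 1 * ((if r ≤ 1 then r ^ (1-s) else r ^ (-s)) / r ^ N)) with hHdef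
  have hHmeas : Measurable H := by
    apply ENNReal.measurable_ofReal.comp
    apply Measurable.const_mul
    apply Measurable.div
    · exact Measurable.ite (measurableSet_le measurable_id measurable_const)
        (by fun_prop) (by fun_prop)
    · exact measurable_id.pow_const N
  set ind : EuclideanSpace ℝ (Fin N) → ℝ≥0∞ := K.indicator (fun _ => (1:ℝ≥0∞)) with hinddef
  have hind : Measurable ind := measurable_const.indicator hKm
  have hbound : ∀ x y : EuclideanSpace ℝ (Fin N),
      ENNReal.ofReal (A (lam * |u x - u y| / ‖x - y‖ ^ s) / ‖x - y‖ ^ N)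
        ≤ (ind x + ind y) * H ‖x - y‖ := by
    intro x y
    by_cases hxy : x ∈ K ∨ y ∈ K
    · have hind1 : (1:ℝ≥0∞) ≤ ind x + ind y := by
        rcases hxy with h | h
        · rw [hinddef]; rw [Set.indicator_of_mem h]; exact self_le_add_right 1 _
        · rw [hinddef]; rw [Set.indicator_of_mem h]; exact self_le_add_left 1 _
      have main : ENNReal.ofReal (A (lam * |u x - u y| / ‖x - y‖ ^ s) / ‖x - y‖ ^ N)
          ≤ H ‖x - y‖ := by
        rcases eq_or_lt_of_le (norm_nonneg (x - y)) with hr | hr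
        · have hx : x = y := by
            have h0 : ‖x - y‖ = 0 := hr.symm
            rw [norm_sub_eq_zero_iff] at h0; exact h0
          simp [hx, hA0]
        · have hrpos : 0 < ‖x - y‖ := hr
          have hrs : 0 < ‖x - y‖ ^ s := Real.rpow_pos_of_pos hrpos s
          have hΔL : |u x - u y| ≤ (L:ℝ) * ‖x - y‖ := by
            have h := hL.dist_le_mul x y
            rwa [Real.dist_eq, dist_eq_norm] at h
          have hΔM : |u x - u y| ≤ 2 * M := by
            calc |u x - u y| ≤ |u x| + |u y| := abs_sub _ _
              _ ≤ M + M := add_le_add (hM' x) (hM' y)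
              _ = 2 * M := by ring
          have harg0 : 0 ≤ lam * |u x - u y| / ‖x - y‖ ^ s := by positivity
          have harg_le : lam * |u x - u y| / ‖x - y‖ ^ s
              ≤ (if ‖x - y‖ ≤ 1 then ‖x - y‖ ^ (1-s) else ‖x - y‖ ^ (-s)) := by
            split_ifs with hr1
            · calc lam * |u x - u y| / ‖x - y‖ ^ s
                  ≤ lam * ((L:ℝ) * ‖x - y‖) / ‖x - y‖ ^ s := by gcongr
                _ = (lam * (L:ℝ)) * (‖x - y‖ / ‖x - y‖ ^ s) := by ring
                _ ≤ 1 * (‖x - y‖ / ‖x - y‖ ^ s) := by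
                    apply mul_le_mul_of_nonneg_right key1
                    positivity
                _ = ‖x - y‖ ^ (1 - s) := by
                    rw [one_mul, Real.rpow_sub hrpos, Real.rpow_one]
            · calc lam * |u x - u y| / ‖x - y‖ ^ s
                  ≤ lam * (2 * M) / ‖x - y‖ ^ s := by gcongr
                _ ≤ 1 / ‖x - y‖ ^ s := by gcongr
                _ = ‖x - y‖ ^ (-s) := by rw [one_div, ← Real.rpow_neg hrpos.le]
          have hite1 : (if ‖x - y‖ ≤ 1 then ‖x - y‖ ^ (1-s) else ‖x - y‖ ^ (-s)) ≤ 1 := by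
            split_ifs with hr1
            · exact Real.rpow_le_one hrpos.le hr1 (by linarith)
            · exact Real.rpow_le_one_of_one_le_of_nonpos (le_of_not_ge hr1) (by linarith)
          have hAarg : A (lam * |u x - u y| / ‖x - y‖ ^ s)
              ≤ A 1 * (if ‖x - y‖ ≤ 1 then ‖x - y‖ ^ (1-s) else ‖x - y‖ ^ (-s)) := by
            calc A (lam * |u x - u y| / ‖x - y‖ ^ s)
                ≤ (lam * |u x - u y| / ‖x - y‖ ^ s) * A 1 :=
                  hA.le_mul harg0 (harg_le.trans hite1)
              _ ≤ (if ‖x - y‖ ≤ 1 then ‖x - y‖ ^ (1-s) else ‖x - y‖ ^ (-s)) * A 1 :=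
                  mul_le_mul_of_nonneg_right harg_le hA1
              _ = A 1 * _ := mul_comm _ _
          rw [hHdef]
          apply ENNReal.ofReal_le_ofReal
          rw [← mul_div_assoc]
          gcongr
      calc ENNReal.ofReal (A (lam * |u x - u y| / ‖x - y‖ ^ s) / ‖x - y‖ ^ N)
          ≤ H ‖x - y‖ := main
        _ = 1 * H ‖x - y‖ := (one_mul _).symm
        _ ≤ (ind x + ind y) * H ‖x - y‖ := mul_le_mul_left hind1 _
    · push_neg at hxy
      have hux : u x = 0 := image_eq_zero_of_notMem_tsupport hxy.1
      have huy : u y = 0 := image_eq_zero_of_notMem_tsupport hxy.2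
      simp [hux, huy, hA0]
  have hIfin : (∫⁻ z : EuclideanSpace ℝ (Fin N), H ‖z‖) < ⊤ := by
    rw [hHdef]
    exact lintegral_H_lt_top hN hs0 hs1 hA1
  have hHcomp : ∀ x : EuclideanSpace ℝ (Fin N), Measurable (fun y : EuclideanSpace ℝ (Fin N) => H ‖x - y‖) := by
    intro x
    exact hHmeas.comp ((continuous_const.sub continuous_id).norm.measurable)
  have hinner1 : ∀ x : EuclideanSpace ℝ (Fin N),
      (∫⁻ y, ind x * H ‖x - y‖) = ind x * ∫⁻ z : EuclideanSpace ℝ (Fin N), H ‖z‖ := by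
    intro x
    rw [lintegral_const_mul _ (hHcomp x)]
    congr 1
    have h : ∀ y : EuclideanSpace ℝ (Fin N), ‖x - y‖ = ‖y - x‖ := fun y => norm_sub_rev _ _
    simp_rw [h]
    exact lintegral_sub_right_eq_self (fun z => H ‖z‖) x
  have hindI : ∀ c : ℝ≥0∞, (∫⁻ x, ind x * c) = c * volume K := by
    intro c
    have h : ∀ x, ind x * c = K.indicator (fun _ => c) x := by
      intro x
      by_cases hx : x ∈ K <;> simp [hinddef, hx]
    simp_rw [h]
    rw [lintegral_indicator hKm, setLIntegral_const]
  calc (∫⁻ x, ∫⁻ y, ENNReal.ofReal (A (lam * |u x - u y| / ‖x - y‖ ^ s) / ‖x - y‖ ^ N))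
      ≤ ∫⁻ x, ∫⁻ y, (ind x + ind y) * H ‖x - y‖ :=
        lintegral_mono fun x => lintegral_mono fun y => hbound x y
    _ = ∫⁻ x, ((∫⁻ y, ind x * H ‖x - y‖) + ∫⁻ y, ind y * H ‖x - y‖) := by
        apply lintegral_congr; intro x
        simp_rw [add_mul]
        rw [lintegral_add_left ((hHcomp x).const_mul _)]
    _ = ∫⁻ x, (ind x * (∫⁻ z : EuclideanSpace ℝ (Fin N), H ‖z‖) + ∫⁻ y, ind y * H ‖x - y‖) := by
        apply lintegral_congr; intro x; rw [hinner1 x]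
    _ = (∫⁻ x, ind x * (∫⁻ z : EuclideanSpace ℝ (Fin N), H ‖z‖)) + ∫⁻ x, ∫⁻ y, ind y * H ‖x - y‖ :=
        lintegral_add_left (hind.mul_const _) _
    _ = (∫⁻ z : EuclideanSpace ℝ (Fin N), H ‖z‖) * volume K + (∫⁻ z : EuclideanSpace ℝ (Fin N), H ‖z‖) * volume K := by
        congr 1
        · exact hindI _
        · have hmeas : Measurable (Function.uncurry
              fun (x y : EuclideanSpace ℝ (Fin N)) => ind y * H ‖x - y‖) := by
            apply Measurable.mul
            · exact hind.comp measurable_snd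
            · exact hHmeas.comp ((measurable_fst.sub measurable_snd).norm)
          rw [lintegral_lintegral_swap hmeas.aemeasurable]
          have h1 : ∀ y : EuclideanSpace ℝ (Fin N),
              (∫⁻ x, ind y * H ‖x - y‖) = ind y * ∫⁻ z : EuclideanSpace ℝ (Fin N), H ‖z‖ := by
            intro y
            have hm : Measurable (fun x : EuclideanSpace ℝ (Fin N) => H ‖x - y‖) :=
              hHmeas.comp ((continuous_id.sub continuous_const).norm.measurable)
            rw [lintegral_const_mul _ hm]
            congr 1
            exact lintegral_sub_right_eq_self (fun z => H ‖z‖) y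
          calc (∫⁻ y, ∫⁻ x, ind y * H ‖x - y‖) = ∫⁻ y, ind y * ∫⁻ z : EuclideanSpace ℝ (Fin N), H ‖z‖ :=
                lintegral_congr h1
            _ = (∫⁻ z : EuclideanSpace ℝ (Fin N), H ‖z‖) * volume K := hindI _
    _ < ⊤ := by
        apply ENNReal.add_lt_top.2
        exact ⟨ENNReal.mul_lt_top hIfin hKfin, ENNReal.mul_lt_top hIfin hKfin⟩


/-- every `C²` function with compact support contained in `Ω`
belongs to `W^s_0 L_A(Ω)`; in particular its Gagliardo modular is finite for
some `λ > 0`. -/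
theorem C2_compactSupport_mem_W0 {N : ℕ} (hN : 0 < N)
    (Ω : Set (EuclideanSpace ℝ (Fin N))) (hΩo : IsOpen Ω)
    (hΩb : Bornology.IsBounded Ω)
    (s : ℝ) (hs : s ∈ Set.Ioo (0:ℝ) 1) (A : ℝ → ℝ) (hA : IsNFunction A)
    (u : EuclideanSpace ℝ (Fin N) → ℝ)
    (hu1 : ContDiff ℝ 2 u) (hu2 : HasCompactSupport u) (hu3 : tsupport u ⊆ Ω) :
    MemW0 A s Ω u ∧ ∃ lam > (0:ℝ),
      (∫⁻ x, ∫⁻ y, ENNReal.ofReal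
        (A (lam * |u x - u y| / ‖x - y‖ ^ s) / ‖x - y‖ ^ N)) < ⊤ := by
  obtain ⟨hs0, hs1⟩ := hs
  have humeas : Measurable u := hu1.continuous.measurable
  obtain ⟨lam, hlam, hfin⟩ := key_finite hN hs0 hs1 hA hu1 hu2
  have hA0 : A 0 = 0 := hA.zero
  have hKm : MeasurableSet (tsupport u) := (isClosed_tsupport u).measurableSet
  have hKfin : volume (tsupport u) < ⊤ := (hu2 : IsCompact (tsupport u)).measure_lt_top
  have hMemLA : MemLA A Set.univ u := by
    refine ⟨humeas, 1, one_pos, ?_⟩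
    rw [Measure.restrict_univ]
    have hvcont : Continuous fun x => A (1 * |u x|) :=
      hA.continuous.comp (continuous_const.mul hu1.continuous.abs)
    obtain ⟨C, hC⟩ := (hu2 : IsCompact (tsupport u)).exists_bound_of_continuousOn
      hvcont.continuousOn
    have hpt : ∀ x, ENNReal.ofReal (A (1 * |u x|))
        ≤ (tsupport u).indicator (fun _ => ENNReal.ofReal C) x := by
      intro x
      by_cases hx : x ∈ tsupport u
      · rw [Set.indicator_of_mem hx]
        apply ENNReal.ofReal_le_ofReal
        exact (le_abs_self _).trans (by simpa [Real.norm_eq_abs] using hC x hx)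
      · rw [Set.indicator_of_notMem hx]
        simp [image_eq_zero_of_notMem_tsupport hx, hA0]
    calc (∫⁻ x, ENNReal.ofReal (A (1 * |u x|)))
        ≤ ∫⁻ x, (tsupport u).indicator (fun _ => ENNReal.ofReal C) x := lintegral_mono hpt
      _ = ENNReal.ofReal C * volume (tsupport u) := by
          rw [lintegral_indicator hKm, setLIntegral_const]
      _ < ⊤ := ENNReal.mul_lt_top ENNReal.ofReal_lt_top hKfin
  refine ⟨⟨⟨hMemLA, lam, hlam, ?_⟩, ?_⟩, lam, hlam, hfin⟩
  · simpa [Measure.restrict_univ] using hfin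
  · exact Eventually.of_forall fun x hx =>
      image_eq_zero_of_notMem_tsupport fun hmem => hx (hu3 hmem)

end
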